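/- Let ⊗ be the tensor product of a closed symmetric monoidal structure on the category Graph of reflexive graphs. Then I_1 ⊗ I_1 has exactly four vertices, and every vertex of I_1 ⊗ I_1 is the image of exactly one of the four morphisms (s,s), (s,t), (t,s), (t,t) : I_0 → I_1 ⊗ I_1. -/

import Mathlib

open CategoryTheory MonoidalCategory

/-- The category of (reflexive) graphs: an object is a set of vertices with an
irreflexive symmetric adjacency relation. -/
structure GraphCat : Type 1 where
  V : Type
  adj : V → V → Prop
  symm : ∀ {v w : V}, adj v w → adj w v
  loopless : ∀ v : V, ¬ adj v v

namespace GraphCat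

/-- A graph map: whenever `v ∼ w`, either `f v = f w` or `f v ∼ f w`. -/
structure Hom (X Y : GraphCat) where
  toFun : X.V → Y.V
  map_adj : ∀ {v w : X.V}, X.adj v w → toFun v = toFun w ∨ Y.adj (toFun v) (toFun w)

theorem Hom.ext' {X Y : GraphCat} {f g : Hom X Y} (h : f.toFun = g.toFun) : f = g := by
  cases f; cases g; cases h; rfl

instance : Category GraphCat where
  Hom := Hom
  id X := ⟨fun v => v, fun h => Or.inr h⟩
  comp f g := ⟨fun v => g.toFun (f.toFun v), fun {v w} h => by
    rcases f.map_adj h with h' | h'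
    · exact Or.inl (congrArg g.toFun h')
    · exact g.map_adj h'⟩
  id_comp f := Hom.ext' rfl
  comp_id f := Hom.ext' rfl
  assoc f g h := Hom.ext' rfl

/-- The one-vertex graph `I₀`. -/
def I0 : GraphCat := ⟨PUnit, fun _ _ => False, fun h => h, fun _ h => h⟩

/-- The graph `I₁` with two vertices `s = false` and `t = true` joined by an edge. -/
def I1 : GraphCat := ⟨Bool, fun v w => v ≠ w, Ne.symm, fun _ h => h rfl⟩

/-- The vertex inclusions `s, t : I₀ ⟶ I₁` (`s` for `false`, `t` for `true`). -/
def vert (b : Bool) : I0 ⟶ I1 := ⟨fun _ => b, fun {_ _} h => h.elim⟩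

section Labels

variable [MonoidalCategory GraphCat]

/-- Given a monoidal structure on graphs with unit `I₀`, the label morphism
`(a, a') : I₀ ⟶ I₁ ⊗ₘ I₁` for `a, a' ∈ {s, t}` (encoded as booleans, `s = false`,
`t = true`): the composite of the unit isomorphism `I₀ ≅ I₀ ⊗ₘ I₀` with `a ⊗ₘ a'`. -/
def lab (hU : (𝟙_ GraphCat) = I0) (a a' : Bool) : I0 ⟶ (I1 ⊗ I1 : GraphCat) :=
  eqToHom hU.symm ≫ (λ_ (𝟙_ GraphCat)).inv ≫
    ((eqToHom hU ≫ vert a) ⊗ₘ (eqToHom hU ≫ vert a'))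

/-- The vertex of `I₁ ⊗ₘ I₁` labelled `(a, a')`, i.e. the image of the morphism
`lab hU a a'`. -/
def vlab (hU : (𝟙_ GraphCat) = I0) (a a' : Bool) : (I1 ⊗ I1 : GraphCat).V :=
  (lab hU a a').toFun PUnit.unit

end Labels

end GraphCat

open GraphCat

namespace GraphCat

def toI0 (X : GraphCat) : X ⟶ I0 := ⟨fun _ => PUnit.unit, fun _ => Or.inl rfl⟩

theorem vert_comp_toI0 (b : Bool) : vert b ≫ toI0 I1 = 𝟙 I0 := Hom.ext' rfl

theorem cover {ι : Type} {X : ι → GraphCat} {Y : GraphCat} (f : ∀ i, X i ⟶ Y)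
    (hc : ∀ (g h : Y ⟶ I1), (∀ i, f i ≫ g = f i ≫ h) → g = h)
    (v : Y.V) : ∃ i u, (f i).toFun u = v := by
  by_contra hv
  push_neg at hv
  haveI : DecidableEq Y.V := Classical.decEq _
  let g : Y ⟶ I1 := ⟨fun _ => false, fun _ => Or.inl rfl⟩
  let h : Y ⟶ I1 := ⟨fun w => decide (w = v), fun {a b} _ => Classical.em _⟩
  have hgh : g = h := by
    refine hc g h fun i => Hom.ext' (funext fun u => ?_)
    show false = decide ((f i).toFun u = v)
    simp [hv i u]
  have hx : (false : Bool) = decide (v = v) :=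
    congrArg (fun k : Y ⟶ I1 => k.toFun v) hgh
  simp at hx

-- continuing inside namespace GraphCat (test file)
section Closed
variable [MonoidalCategory GraphCat] [SymmetricCategory GraphCat] [MonoidalClosed GraphCat]

theorem cancel_whiskerLeft {X Z : GraphCat} (g h : (X ⊗ I1 : GraphCat) ⟶ Z)
    (hb : ∀ b : Bool, (𝟙 X ⊗ₘ vert b) ≫ g = (𝟙 X ⊗ₘ vert b) ≫ h) : g = h := by
  apply MonoidalClosed.curry_injective
  apply Hom.ext'
  funext x
  have hx : vert x ≫ MonoidalClosed.curry g = vert x ≫ MonoidalClosed.curry h := by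
    rw [← MonoidalClosed.curry_natural_left, ← MonoidalClosed.curry_natural_left]
    have := hb x
    rw [id_tensorHom] at this
    rw [this]
  exact congrArg (fun k : (I0 ⟶ (CategoryTheory.ihom X).obj Z) => k.toFun PUnit.unit) hx

theorem cancel_whiskerRight {Z : GraphCat} (g h : (I1 ⊗ I0 : GraphCat) ⟶ Z)
    (hb : ∀ b : Bool, (vert b ⊗ₘ 𝟙 I0) ≫ g = (vert b ⊗ₘ 𝟙 I0) ≫ h) : g = h := by
  have key : (β_ I1 I0).inv ≫ g = (β_ I1 I0).inv ≫ h := by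
    apply cancel_whiskerLeft
    intro b
    have nat : (𝟙 I0 ⊗ₘ vert b) ≫ (β_ I1 I0).inv
        = (β_ I0 I0).inv ≫ (vert b ⊗ₘ 𝟙 I0) := by
      rw [Iso.comp_inv_eq, Category.assoc, BraidedCategory.braiding_naturality,
        Iso.inv_hom_id_assoc]
    rw [← Category.assoc, nat, ← Category.assoc, nat, Category.assoc, Category.assoc, hb b]
  exact (cancel_epi (β_ I1 I0).inv).mp key

theorem I0I0_subsingleton (hU : (𝟙_ GraphCat) = I0) (w w' : (I0 ⊗ I0 : GraphCat).V) :
    w = w' := by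
  let φ : (I0 ⊗ I0 : GraphCat) ≅ I0 :=
    (tensorIso (eqToIso hU.symm) (eqToIso hU.symm)) ≪≫ λ_ (𝟙_ GraphCat) ≪≫ eqToIso hU
  have hφ : ∀ u, φ.inv.toFun (φ.hom.toFun u) = u := fun u =>
    congrArg (fun k : ((I0 ⊗ I0 : GraphCat) ⟶ (I0 ⊗ I0 : GraphCat)) => k.toFun u) φ.hom_inv_id
  have hP : φ.hom.toFun w = φ.hom.toFun w' := rfl
  calc w = φ.inv.toFun (φ.hom.toFun w) := (hφ w).symm
    _ = φ.inv.toFun (φ.hom.toFun w') := congrArg φ.inv.toFun hP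
    _ = w' := hφ w'

theorem lab_comp_fst (hU : (𝟙_ GraphCat) = I0) (a a' : Bool) :
    lab hU a a' ≫ ((𝟙 I1 ⊗ₘ (toI0 I1 ≫ eqToHom hU.symm)) ≫ (ρ_ I1).hom) = vert a := by
  rw [lab]
  have h1 : ((eqToHom hU ≫ vert a) ⊗ₘ (eqToHom hU ≫ vert a')) ≫
      (𝟙 I1 ⊗ₘ (toI0 I1 ≫ eqToHom hU.symm))
      = ((eqToHom hU ≫ vert a) ⊗ₘ 𝟙 (𝟙_ GraphCat)) := by
    rw [tensorHom_comp_tensorHom, Category.comp_id]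
    congr 1
    rw [Category.assoc, ← Category.assoc (vert a'), vert_comp_toI0, Category.id_comp,
      eqToHom_trans, eqToHom_refl]
  slice_lhs 3 4 => rw [h1]
  rw [tensorHom_id, rightUnitor_naturality, ← unitors_equal, Iso.inv_hom_id_assoc,
    eqToHom_trans_assoc, eqToHom_refl, Category.id_comp]

theorem lab_comp_snd (hU : (𝟙_ GraphCat) = I0) (a a' : Bool) :
    lab hU a a' ≫ (((toI0 I1 ≫ eqToHom hU.symm) ⊗ₘ 𝟙 I1) ≫ (λ_ I1).hom) = vert a' := by
  rw [lab]
  have h1 : ((eqToHom hU ≫ vert a) ⊗ₘ (eqToHom hU ≫ vert a')) ≫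
      ((toI0 I1 ≫ eqToHom hU.symm) ⊗ₘ 𝟙 I1)
      = (𝟙 (𝟙_ GraphCat) ⊗ₘ (eqToHom hU ≫ vert a')) := by
    rw [tensorHom_comp_tensorHom, Category.comp_id]
    congr 1
    rw [Category.assoc, ← Category.assoc (vert a), vert_comp_toI0, Category.id_comp,
      eqToHom_trans, eqToHom_refl]
  slice_lhs 3 4 => rw [h1]
  rw [id_tensorHom, leftUnitor_naturality, Iso.inv_hom_id_assoc,
    eqToHom_trans_assoc, eqToHom_refl, Category.id_comp]

end Closed
end GraphCat

/-- Let `⊗` be the tensor product of a closed symmetric monoidal structure on the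
category of (reflexive) graphs (whose unit is necessarily `I₀`).  Then `I₁ ⊗ₘ I₁` has
exactly four vertices, and every vertex of `I₁ ⊗ₘ I₁` is the image of exactly one of
the four label morphisms `(s,s), (s,t), (t,s), (t,t) : I₀ ⟶ I₁ ⊗ₘ I₁`; that is, the
labelling map `Bool × Bool → (I₁ ⊗ₘ I₁).V` is a bijection. -/
theorem labels_bijective [MonoidalCategory GraphCat] [SymmetricCategory GraphCat]
    [MonoidalClosed GraphCat] (hU : (𝟙_ GraphCat) = I0) :
    Function.Bijective (fun p : Bool × Bool => vlab hU p.1 p.2) := by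
  constructor
  · rintro ⟨a, a'⟩ ⟨b, b'⟩ hab
    simp only at hab
    set p1 : (I1 ⊗ I1 : GraphCat) ⟶ I1 :=
      (𝟙 I1 ⊗ₘ (toI0 I1 ≫ eqToHom hU.symm)) ≫ (ρ_ I1).hom with hp1
    set p2 : (I1 ⊗ I1 : GraphCat) ⟶ I1 :=
      ((toI0 I1 ≫ eqToHom hU.symm) ⊗ₘ 𝟙 I1) ≫ (λ_ I1).hom with hp2
    have e1 : ∀ c c' : Bool, p1.toFun (vlab hU c c') = c := fun c c' =>
      congrArg (fun k : (I0 ⟶ I1) => k.toFun PUnit.unit) (lab_comp_fst hU c c')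
    have e2 : ∀ c c' : Bool, p2.toFun (vlab hU c c') = c' := fun c c' =>
      congrArg (fun k : (I0 ⟶ I1) => k.toFun PUnit.unit) (lab_comp_snd hU c c')
    have h1 : a = b := by rw [← e1 a a', ← e1 b b', hab]
    have h2 : a' = b' := by rw [← e2 a a', ← e2 b b', hab]
    simp [h1, h2]
  · intro v
    obtain ⟨a, u, hu⟩ := cover (fun b : Bool => (𝟙 I1 ⊗ₘ vert b : (I1 ⊗ I0 : GraphCat) ⟶ _))
      (fun g h hgh => cancel_whiskerLeft g h hgh) v
    obtain ⟨b, w, hw⟩ := cover (fun c : Bool => (vert c ⊗ₘ 𝟙 I0 : (I0 ⊗ I0 : GraphCat) ⟶ _))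
      (fun g h hgh => cancel_whiskerRight g h hgh) u
    refine ⟨(b, a), ?_⟩
    show vlab hU b a = v
    have hcomp : (vert b ⊗ₘ 𝟙 I0) ≫ (𝟙 I1 ⊗ₘ vert a) = (vert b ⊗ₘ vert a) := by
      rw [tensorHom_comp_tensorHom, Category.comp_id, Category.id_comp]
    have hv : (vert b ⊗ₘ vert a).toFun w = v := by
      rw [← hcomp]
      show (𝟙 I1 ⊗ₘ vert a).toFun ((vert b ⊗ₘ 𝟙 I0).toFun w) = v
      rw [hw, hu]
    have hl : lab hU b a =
        (eqToHom hU.symm ≫ (λ_ (𝟙_ GraphCat)).inv ≫ (eqToHom hU ⊗ₘ eqToHom hU)) ≫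
          (vert b ⊗ₘ vert a) := by
      rw [lab, ← tensorHom_comp_tensorHom]
      simp only [Category.assoc]
    have : vlab hU b a = (vert b ⊗ₘ vert a).toFun
        ((eqToHom hU.symm ≫ (λ_ (𝟙_ GraphCat)).inv ≫
          (eqToHom hU ⊗ₘ eqToHom hU)).toFun PUnit.unit) := by
      rw [vlab, hl]; rfl
    have hw0 := I0I0_subsingleton hU ((eqToHom hU.symm ≫ (λ_ (𝟙_ GraphCat)).inv ≫
      (eqToHom hU ⊗ₘ eqToHom hU)).toFun PUnit.unit) w
    rw [this, hw0, hv]
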